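/- For the negative-variance fairness function F_var(Z) = −(1/n)Σᵢ(zᵢ − μ)², where μ = (1/n)Σᵢ zᵢ, and a nonnegative increment vector y, the joint fairness improvement dominates the sum of local gains: F_var(Z+y) − F_var(Z) ≥ Σᵢ [F_var(Z + yᵢeᵢ) − F_var(Z)]. -/

import Mathlib

open Finset

/-- Negative-variance fairness function `F_var(Z) = -(1/n) ∑ i (z_i - μ)²`. -/
noncomputable def Fvar {n : ℕ} (Z : Fin n → ℝ) : ℝ :=
  -((1 : ℝ) / n) * ∑ i, (Z i - (∑ j, Z j) / n) ^ 2

lemma Fvar_expand {n : ℕ} (hn : (n : ℝ) ≠ 0) (W : Fin n → ℝ) :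
    Fvar W = -(∑ i, (W i) ^ 2) / n + (∑ i, W i) ^ 2 / n ^ 2 := by
  unfold Fvar
  have h1 : ∑ i, (W i - (∑ j, W j) / n) ^ 2
      = ∑ i, ((W i) ^ 2 - (2 * ((∑ j, W j) / n)) * W i + ((∑ j, W j) / n) ^ 2) := by
    apply Finset.sum_congr rfl; intros; ring
  rw [h1, Finset.sum_add_distrib, Finset.sum_sub_distrib, ← Finset.mul_sum,
    Finset.sum_const, Finset.card_univ, Fintype.card_fin, nsmul_eq_mul]
  field_simp
  ring

/-- **Local–Gain lower bound for negative variance.** -/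
theorem neg_variance_local_gain_lb {n : ℕ} (hn : 1 ≤ n)
    (Z y : Fin n → ℝ) (hy : ∀ i, 0 ≤ y i) :
    Fvar (Z + y) - Fvar Z ≥
      ∑ i, (Fvar (Function.update Z i (Z i + y i)) - Fvar Z) := by
  have hn0 : (n : ℝ) ≠ 0 := Nat.cast_ne_zero.mpr (by omega)
  set S := ∑ i, Z i with hS
  set T := ∑ i, y i with hT
  set Q := ∑ i, (Z i) ^ 2 with hQ
  set A := ∑ i, Z i * y i with hA
  set B := ∑ i, (y i) ^ 2 with hB
  -- rewrite each summand on the RHS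
  have hsum : ∑ i, (Fvar (Function.update Z i (Z i + y i)) - Fvar Z)
      = ∑ i, ((-2 / n) * (Z i * y i) + (-1 / n + 1 / n ^ 2) * (y i) ^ 2
              + (2 * S / n ^ 2) * y i) := by
    apply Finset.sum_congr rfl
    intro i _
    rw [Fvar_expand hn0, Fvar_expand hn0]
    have hupd1 : ∑ j, Function.update Z i (Z i + y i) j = S + y i := by
      rw [Finset.sum_update_of_mem (Finset.mem_univ i), Finset.sdiff_singleton_eq_erase,
        Finset.sum_erase_eq_sub (Finset.mem_univ i)]
      simp [hS]; ring
    have hupd2 : ∑ j, (Function.update Z i (Z i + y i) j) ^ 2 = Q + 2 * Z i * y i + (y i) ^ 2 := by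
      have : ∑ j, (Function.update Z i (Z i + y i) j) ^ 2
          = ∑ j, Function.update (fun j => (Z j) ^ 2) i ((Z i + y i) ^ 2) j := by
        apply Finset.sum_congr rfl
        intro j _
        rcases eq_or_ne j i with rfl | h
        · simp
        · simp [Function.update_of_ne h]
      rw [this, Finset.sum_update_of_mem (Finset.mem_univ i), Finset.sdiff_singleton_eq_erase,
        Finset.sum_erase_eq_sub (Finset.mem_univ i)]
      simp only [hQ]; ring
    rw [hupd1, hupd2]
    field_simp
    ring
  rw [hsum, Finset.sum_add_distrib, Finset.sum_add_distrib, ← Finset.mul_sum, ← Finset.mul_sum,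
    ← Finset.mul_sum, ← hA, ← hB, ← hT]
  have hlhs1 : ∑ i, (Z + y) i = S + T := by
    simp [hS, hT, Finset.sum_add_distrib, Pi.add_apply]
  have hlhs2 : ∑ i, ((Z + y) i) ^ 2 = Q + 2 * A + B := by
    have : ∀ i : Fin n, ((Z + y) i) ^ 2 = (Z i) ^ 2 + 2 * (Z i * y i) + (y i) ^ 2 := by
      intro i; simp [Pi.add_apply]; ring
    simp only [this, Finset.sum_add_distrib, ← Finset.mul_sum]
    rfl
  rw [Fvar_expand hn0, Fvar_expand hn0, hlhs1, hlhs2, ← hS, ← hQ]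
  have hBT : B ≤ T ^ 2 := by
    simpa [hB, hT] using Finset.sum_sq_le_sq_sum_of_nonneg (f := y)
      (s := Finset.univ) (fun i _ => hy i)
  have key : (-(Q + 2 * A + B) / n + (S + T) ^ 2 / n ^ 2 - (-Q / n + S ^ 2 / n ^ 2))
      - ((-2 / n) * A + (-1 / n + 1 / n ^ 2) * B + (2 * S / n ^ 2) * T)
      = (T ^ 2 - B) / n ^ 2 := by
    field_simp
    ring
  have hpos : 0 ≤ (T ^ 2 - B) / n ^ 2 :=
    div_nonneg (sub_nonneg.mpr hBT) (sq_nonneg _)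
  linarith [key ▸ hpos]
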